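/- arXiv:1907.13040 — 3 statements merged into one kernel-verified Lean document; each statement's English description precedes it below -/
import Mathlib

section
/- (Iwahori-type double coset decomposition.) Every g ∈ GL₂(F) can be written as g = k·n⁻(c)·b with k ∈ K₁¹(ϖ^r), b ∈ P, and either c ∈ O or c = ∞. Moreover, for c, c' ∈ O with c − c' ∈ ϖ^rO, the double cosets K₁¹(ϖ^r)·n⁻(c)·P and K₁¹(ϖ^r)·n⁻(c')·P coincide. Consequently, the double-coset space K₁¹(ϖ^r)\GL₂(F)/P is covered by the double cosets of the elements n⁻(c), where c runs over a set of representatives of O/ϖ^rO, together with the double coset of n⁻(∞). -/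
/-- The subgroup `K₁¹(ϖ^r)` of `GL₂(F)` (as a set of matrices): matrices with all entries
in `O`, determinant in `O^×`, and reducing to an upper unipotent matrix modulo `ϖ^r`. -/
def K11 (O F : Type*) [CommRing O] [Field F] [Algebra O F] (ϖ : O) (r : ℕ) :
    Set (Matrix (Fin 2) (Fin 2) F) :=
  {g | (∀ i j, ∃ a : O, algebraMap O F a = g i j) ∧
    (∃ u : Oˣ, algebraMap O F (u : O) = g.det) ∧
    (∃ a : O, algebraMap O F (ϖ ^ r * a) = g 0 0 - 1) ∧
    (∃ a : O, algebraMap O F (ϖ ^ r * a) = g 1 0) ∧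
    (∃ a : O, algebraMap O F (ϖ ^ r * a) = g 1 1 - 1)}

/-- The subgroup `P ⊆ GL₂(F)` of invertible upper triangular matrices (as a set of
matrices). -/
def upperBorel (F : Type*) [Field F] : Set (Matrix (Fin 2) (Fin 2) F) :=
  {b | b 1 0 = 0 ∧ b.det ≠ 0}

/-- `n⁻(c) = [[1, 0], [c, 1]]` for `c ∈ O`. -/
def nLower (O F : Type*) [CommRing O] [Field F] [Algebra O F] (c : O) :
    Matrix (Fin 2) (Fin 2) F :=
  !![1, 0; algebraMap O F c, 1]

/-- `n⁻(∞) = [[0, 1], [-1, 0]]`. -/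
def nLowerInf (F : Type*) [Field F] : Matrix (Fin 2) (Fin 2) F :=
  !![0, 1; -1, 0]

section Aux

variable {O : Type*} [CommRing O] [IsDomain O]
variable {F : Type*} [Field F] [Algebra O F]
variable (ϖ : O) (r : ℕ)

lemma mem_K11_upper (y : O) : !![1, algebraMap O F y; 0, 1] ∈ K11 O F ϖ r := by
  refine ⟨?_, ⟨1, ?_⟩, ⟨0, ?_⟩, ⟨0, ?_⟩, ⟨0, ?_⟩⟩
  · intro i j
    fin_cases i <;> fin_cases j
    exacts [⟨1, by simp⟩, ⟨y, by simp⟩, ⟨0, by simp⟩, ⟨1, by simp⟩]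
  · simp [Matrix.det_fin_two_of]
  · simp
  · simp
  · simp

lemma one_mem_K11 : (1 : Matrix (Fin 2) (Fin 2) F) ∈ K11 O F ϖ r := by
  have := mem_K11_upper (F := F) ϖ r (0 : O)
  simpa [Matrix.one_fin_two] using this

lemma K11_mul_lower {k : Matrix (Fin 2) (Fin 2) F} (hk : k ∈ K11 O F ϖ r) (a : O) :
    k * !![1, 0; algebraMap O F (ϖ ^ r * a), 1] ∈ K11 O F ϖ r := by
  obtain ⟨hent, ⟨u, hu⟩, ⟨a0, h0⟩, ⟨a1, h1⟩, ⟨a2, h2⟩⟩ := hk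
  set M : Matrix (Fin 2) (Fin 2) F := !![1, 0; algebraMap O F (ϖ ^ r * a), 1] with hM
  have hmul : ∀ i, (k * M) i 0 = k i 0 + k i 1 * algebraMap O F (ϖ ^ r * a) := by
    intro i
    rw [Matrix.mul_apply, Fin.sum_univ_two]
    simp [hM]
  have hmul1 : ∀ i, (k * M) i 1 = k i 1 := by
    intro i
    rw [Matrix.mul_apply, Fin.sum_univ_two]
    simp [hM]
  obtain ⟨c01, hc01⟩ := hent 0 1
  obtain ⟨c11, hc11⟩ := hent 1 1
  refine ⟨?_, ⟨u, ?_⟩, ⟨a0 + c01 * a, ?_⟩, ⟨a1 + c11 * a, ?_⟩, ⟨a2, ?_⟩⟩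
  · intro i j
    obtain ⟨x0, hx0⟩ := hent i 0
    obtain ⟨x1, hx1⟩ := hent i 1
    fin_cases j <;> simp only [Fin.mk_zero, Fin.mk_one, Fin.zero_eta, Fin.mk_one, Fin.isValue]
    · exact ⟨x0 + x1 * (ϖ ^ r * a), by rw [hmul i, map_add, map_mul, hx0, hx1]⟩
    · exact ⟨x1, by rw [hmul1 i, hx1]⟩
  · rw [Matrix.det_mul, hu]
    have : M.det = 1 := by simp [hM, Matrix.det_fin_two_of]
    rw [this, mul_one]
  · have : (ϖ ^ r * (a0 + c01 * a)) = ϖ ^ r * a0 + c01 * (ϖ ^ r * a) := by ring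
    rw [hmul 0, this, map_add, h0, map_mul, hc01]
    ring
  · have : (ϖ ^ r * (a1 + c11 * a)) = ϖ ^ r * a1 + c11 * (ϖ ^ r * a) := by ring
    rw [hmul 1, this, map_add, h1, map_mul, hc11]
  · rw [hmul1 1, ← h2]

end Aux

/-- **Iwahori-type double coset decomposition.**
Let `O` be a discrete valuation ring with fraction field `F` and uniformizer `ϖ`, and fix
`r ≥ 1`.  (1) Every `g ∈ GL₂(F)` can be written as `g = k·n⁻(c)·b` with `k ∈ K₁¹(ϖ^r)`,
`b ∈ P`, and either `c ∈ O` or `c = ∞`.  (2) For `c, c' ∈ O` with `c − c' ∈ ϖ^r O`, the double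
cosets `K₁¹(ϖ^r)·n⁻(c)·P` and `K₁¹(ϖ^r)·n⁻(c')·P` coincide.  (3) Consequently, for any set of
representatives of `O/ϖ^r O`, the double coset space `K₁¹(ϖ^r)\GL₂(F)/P` is covered by the
double cosets of the `n⁻(c)`, `c` running over the representatives, together with that of
`n⁻(∞)`. -/
theorem iwahori_double_coset_decomposition
    (O : Type*) [CommRing O] [IsDomain O] [IsDiscreteValuationRing O]
    (F : Type*) [Field F] [Algebra O F] [IsFractionRing O F]
    (ϖ : O) (hϖ : Irreducible ϖ) (r : ℕ) (hr : 1 ≤ r) :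
    (∀ g : Matrix (Fin 2) (Fin 2) F, g.det ≠ 0 →
      ∃ k ∈ K11 O F ϖ r, ∃ b ∈ upperBorel F,
        (∃ c : O, g = k * nLower O F c * b) ∨ g = k * nLowerInf F * b) ∧
    (∀ c c' : O, (∃ a : O, c - c' = ϖ ^ r * a) →
      ∀ x : Matrix (Fin 2) (Fin 2) F,
        (∃ k ∈ K11 O F ϖ r, ∃ b ∈ upperBorel F, x = k * nLower O F c * b) ↔
        (∃ k ∈ K11 O F ϖ r, ∃ b ∈ upperBorel F, x = k * nLower O F c' * b)) ∧
    (∀ Rep : Set O, (∀ c : O, ∃ c' ∈ Rep, ∃ a : O, c - c' = ϖ ^ r * a) →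
      ∀ g : Matrix (Fin 2) (Fin 2) F, g.det ≠ 0 →
        ∃ k ∈ K11 O F ϖ r, ∃ b ∈ upperBorel F,
          (∃ c ∈ Rep, g = k * nLower O F c * b) ∨ g = k * nLowerInf F * b) := by
  have p1 : ∀ g : Matrix (Fin 2) (Fin 2) F, g.det ≠ 0 →
      ∃ k ∈ K11 O F ϖ r, ∃ b ∈ upperBorel F,
        (∃ c : O, g = k * nLower O F c * b) ∨ g = k * nLowerInf F * b := by
    intro g hg
    have hdet2 : g 0 0 * g 1 1 - g 0 1 * g 1 0 ≠ 0 := by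
      rwa [Matrix.det_fin_two] at hg
    have caseA : ∀ c : O, algebraMap O F c * g 0 0 = g 1 0 → g 0 0 ≠ 0 →
        ∃ k ∈ K11 O F ϖ r, ∃ b ∈ upperBorel F,
          (∃ c : O, g = k * nLower O F c * b) ∨ g = k * nLowerInf F * b := by
      intro c hC h00
      refine ⟨1, one_mem_K11 ϖ r,
        !![g 0 0, g 0 1; 0, g 1 1 - algebraMap O F c * g 0 1], ⟨by simp, ?_⟩,
        Or.inl ⟨c, ?_⟩⟩
      · have hbd : (!![g 0 0, g 0 1; 0, g 1 1 - algebraMap O F c * g 0 1]).det = g.det := by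
          rw [Matrix.det_fin_two_of, Matrix.det_fin_two]
          linear_combination (-(g 0 1)) * hC
        rw [hbd]; exact hg
      · rw [one_mul]
        ext i j
        fin_cases i <;> fin_cases j <;>
          simp [nLower, Matrix.mul_apply, Fin.sum_univ_two] <;>
          first
          | linear_combination -hC
          | linear_combination hC
          | (simp only [Algebra.smul_def]; linear_combination -hC)
          | (simp only [Algebra.smul_def]; linear_combination hC)
          | (simp only [Algebra.smul_def]; ring)
          | ring
    have caseInf : ∀ y : O, algebraMap O F y * g 1 0 = g 0 0 → g 1 0 ≠ 0 →
        ∃ k ∈ K11 O F ϖ r, ∃ b ∈ upperBorel F,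
          (∃ c : O, g = k * nLower O F c * b) ∨ g = k * nLowerInf F * b := by
      intro y hY h10
      refine ⟨!![1, algebraMap O F y; 0, 1], mem_K11_upper ϖ r y,
        !![-(g 1 0), -(g 1 1); 0, g 0 1 - algebraMap O F y * g 1 1], ⟨by simp, ?_⟩,
        Or.inr ?_⟩
      · have hbd : (!![-(g 1 0), -(g 1 1); 0, g 0 1 - algebraMap O F y * g 1 1]).det
            = g.det := by
          rw [Matrix.det_fin_two_of, Matrix.det_fin_two]
          linear_combination (g 1 1) * hY
        rw [hbd]; exact hg
      · ext i j
        fin_cases i <;> fin_cases j <;>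
          simp [nLowerInf, Matrix.mul_apply, Fin.sum_univ_two] <;>
          first
          | linear_combination -hY
          | linear_combination hY
          | (simp only [Algebra.smul_def]; linear_combination -hY)
          | (simp only [Algebra.smul_def]; linear_combination hY)
          | (simp only [Algebra.smul_def]; ring)
          | ring
    by_cases h10 : g 1 0 = 0
    · have h00 : g 0 0 ≠ 0 := by
        intro h
        exact hdet2 (by rw [h, h10]; ring)
      exact caseA 0 (by simp [h10]) h00
    · by_cases h00 : g 0 0 = 0
      · exact caseInf 0 (by simp [h00]) h10
      · rcases ValuationRing.isInteger_or_isInteger O (g 1 0 / g 0 0) with ⟨c, hc⟩ | ⟨y, hy⟩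
        · refine caseA c ?_ h00
          rw [hc, div_mul_cancel₀ _ h00]
        · refine caseInf y ?_ h10
          rw [inv_div] at hy
          rw [hy, div_mul_cancel₀ _ h10]
  have p2dir : ∀ c c' : O, (∃ a : O, c - c' = ϖ ^ r * a) →
      ∀ x : Matrix (Fin 2) (Fin 2) F,
        (∃ k ∈ K11 O F ϖ r, ∃ b ∈ upperBorel F, x = k * nLower O F c * b) →
        (∃ k ∈ K11 O F ϖ r, ∃ b ∈ upperBorel F, x = k * nLower O F c' * b) := by
    rintro c c' ⟨a, ha⟩ x ⟨k, hk, b, hb, hx⟩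
    refine ⟨k * !![1, 0; algebraMap O F (ϖ ^ r * a), 1], K11_mul_lower ϖ r hk a,
      b, hb, ?_⟩
    have hc : c = ϖ ^ r * a + c' := by rw [← ha]; ring
    have hsplit : nLower O F c
        = !![(1 : F), 0; algebraMap O F (ϖ ^ r * a), 1] * nLower O F c' := by
      ext i j
      fin_cases i <;> fin_cases j <;>
        simp [nLower, Matrix.mul_apply, Fin.sum_univ_two, hc, map_add]
    rw [hx, hsplit]
    simp [mul_assoc]
  have p2 : ∀ c c' : O, (∃ a : O, c - c' = ϖ ^ r * a) →
      ∀ x : Matrix (Fin 2) (Fin 2) F,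
        (∃ k ∈ K11 O F ϖ r, ∃ b ∈ upperBorel F, x = k * nLower O F c * b) ↔
        (∃ k ∈ K11 O F ϖ r, ∃ b ∈ upperBorel F, x = k * nLower O F c' * b) := by
    rintro c c' ⟨a, ha⟩ x
    constructor
    · exact p2dir c c' ⟨a, ha⟩ x
    · refine p2dir c' c ⟨-a, ?_⟩ x
      rw [mul_neg, ← ha]; ring
  refine ⟨p1, p2, ?_⟩
  intro Rep hRep g hg
  obtain ⟨k, hk, b, hb, h⟩ := p1 g hg
  rcases h with ⟨c, hgc⟩ | hinf
  · obtain ⟨c', hc', a, ha⟩ := hRep c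
    obtain ⟨k', hk', b', hb', h'⟩ := (p2 c c' ⟨a, ha⟩ g).mp ⟨k, hk, b, hb, hgc⟩
    exact ⟨k', hk', b', hb', Or.inl ⟨c', hc', h'⟩⟩
  · exact ⟨k, hk, b, hb, Or.inr hinf⟩
end

section
/- (Lemma 4.2, right-coset classification of Ξ(ϖ^r)_a.) Let a ∈ F^× with v(a) = s ≥ r. Then: (1) for every b ∈ O_E with q(b) ∈ 1 − a(1 + ϖ^rO_F), the element x(b) belongs to Ξ(ϖ^r)_a; (2) every x ∈ Ξ(ϖ^r)_a lies in x(b)·Ũ for some b ∈ O_E with q(b) ∈ 1 − a(1 + ϖ^rO_F); (3) for b, b' ∈ O_E with q(b), q(b') ∈ 1 − a(1 + ϖ^rO_F), one has x(b)·Ũ = x(b')·Ũ if and only if b − b' ∈ ϖ^{r+s}O_E. Consequently, b ↦ x(b)·Ũ induces a bijection from the quotient of {b ∈ O_E : q(b) ∈ 1 − a(1 + ϖ^rO_F)} by the multiplication action of the group 1 + ϖ^{r+s}O_E onto the set of right cosets {x·Ũ : x ∈ Ξ(ϖ^r)_a}. -/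
/-- The matrix `j := [[1, T], [0, -1]]`. -/
def jmat {F : Type*} [Field F] (T : F) : Matrix (Fin 2) (Fin 2) F :=
  !![1, T; 0, -1]

/-- Membership in `O_E := O_F + θ·O_F ⊆ E`. -/
def inOE (F E : Type*) [Field F] [Field E] [Algebra F E] (O : Subring F) (θ : E)
    (x : E) : Prop :=
  ∃ a ∈ O, ∃ b ∈ O, x = algebraMap F E a + θ * algebraMap F E b

/-- The subgroup `Ũ = 1 + ϖ^r·M₂(O_F)` of `GL₂(F)` (as a set of matrices). -/
def Utilde (F : Type*) [Field F] (O : Subring F) (ϖF : F) (r : ℕ) :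
    Set (Matrix (Fin 2) (Fin 2) F) :=
  {m | ∃ n : Matrix (Fin 2) (Fin 2) F, (∀ i j, n i j ∈ O) ∧ m = 1 + ϖF ^ r • n}

/-- The set `Ξ(ϖ^r) = {ι(x₁) + j·ι(x₂) : x₁ ∈ 1 + ϖ^r O_E, x₂ ∈ O_E, q(x₂) ∈ 1 + ϖ^r O_F}`. -/
def XiSet (F E : Type*) [Field F] [Field E] [Algebra F E] (O : Subring F) (θ : E)
    (T : F) (c : E → E) (ι : E → Matrix (Fin 2) (Fin 2) F) (ϖF : F) (r : ℕ) :
    Set (Matrix (Fin 2) (Fin 2) F) :=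
  {m | ∃ x₁ x₂ : E,
    (∃ y : E, inOE F E O θ y ∧ x₁ = 1 + algebraMap F E (ϖF ^ r) * y) ∧
    inOE F E O θ x₂ ∧
    (∃ u ∈ O, x₂ * c x₂ = algebraMap F E (1 + ϖF ^ r * u)) ∧
    m = ι x₁ + jmat T * ι x₂}

/-- The set `Ξ(ϖ^r)_a = {x ∈ Ξ(ϖ^r) : det x ∈ a(1 + ϖ^r O_F)}`. -/
def XiSetA (F E : Type*) [Field F] [Field E] [Algebra F E] (O : Subring F) (θ : E)
    (T : F) (c : E → E) (ι : E → Matrix (Fin 2) (Fin 2) F) (ϖF : F) (r : ℕ) (a : F) :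
    Set (Matrix (Fin 2) (Fin 2) F) :=
  {m | m ∈ XiSet F E O θ T c ι ϖF r ∧ ∃ u ∈ O, m.det = a * (1 + ϖF ^ r * u)}

/-- The right coset `x·Ũ`. -/
def rightCoset' (F : Type*) [Field F] (O : Subring F) (ϖF : F) (r : ℕ)
    (x : Matrix (Fin 2) (Fin 2) F) : Set (Matrix (Fin 2) (Fin 2) F) :=
  {m | ∃ u ∈ Utilde F O ϖF r, m = x * u}

namespace L42

lemma mat2_eq_iff {α : Type*} (a b c d e f g h : α) :
    (!![a,b;c,d] : Matrix (Fin 2) (Fin 2) α) = !![e,f;g,h] ↔ a = e ∧ b = f ∧ c = g ∧ d = h := by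
  constructor
  · intro h'
    exact ⟨by simpa using congrFun (congrFun h' 0) 0, by simpa using congrFun (congrFun h' 0) 1,
      by simpa using congrFun (congrFun h' 1) 0, by simpa using congrFun (congrFun h' 1) 1⟩
  · rintro ⟨rfl, rfl, rfl, rfl⟩; rfl

lemma smul_fin_two {α : Type*} [CommRing α] (t a b c d : α) :
    t • (!![a,b;c,d] : Matrix (Fin 2) (Fin 2) α) = !![t*a, t*b; t*c, t*d] := by
  ext i j
  fin_cases i <;> fin_cases j <;> simp [smul_eq_mul]

lemma add_fin_two {α : Type*} [CommRing α] (a b c d e f g h : α) :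
    (!![a,b;c,d] : Matrix (Fin 2) (Fin 2) α) + !![e,f;g,h] = !![a+e, b+f; c+g, d+h] := by
  ext i j
  fin_cases i <;> fin_cases j <;> simp

section Rep
variable {F E : Type*} [Field F] [Field E] [Algebra F E]

def mk (θ : E) (a b : F) : E := algebraMap F E a + θ * algebraMap F E b

def Rep (θ : E) (A B : E → F) : Prop :=
  (∀ x : E, x = mk θ (A x) (B x)) ∧ ∀ (x : E) (a b : F), x = mk θ a b → a = A x ∧ b = B x

def qF (T N : F) (A B : E → F) (x : E) : F := A x ^ 2 + T * (A x * B x) + N * B x ^ 2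

variable {θ : E} {A B : E → F} (h : Rep θ A B) {T N : F}
  (hθ : θ ^ 2 = algebraMap F E T * θ - algebraMap F E N)
  (c : E ≃ₐ[F] E) (hcθ : c θ = algebraMap F E T - θ)
  {ι : E → Matrix (Fin 2) (Fin 2) F}
  (hι : ∀ a b : F, ι (algebraMap F E a + θ * algebraMap F E b) = !![a + b * T, b * N; -b, a])

include h

lemma rep_ext {x y : E} (ha : A x = A y) (hb : B x = B y) : x = y := by
  rw [h.1 x, h.1 y, ha, hb]

lemma A_one : A 1 = 1 ∧ B 1 = 0 := by
  have := h.2 1 1 0 (by simp [mk])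
  exact ⟨this.1.symm, this.2.symm⟩

lemma A_add (x y : E) : A (x + y) = A x + A y ∧ B (x + y) = B x + B y := by
  have : x + y = mk θ (A x + A y) (B x + B y) := by
    conv_lhs => rw [h.1 x, h.1 y]
    simp only [mk, map_add]; ring
  have := h.2 _ _ _ this
  exact ⟨this.1.symm, this.2.symm⟩

lemma A_sub (x y : E) : A (x - y) = A x - A y ∧ B (x - y) = B x - B y := by
  have : x - y = mk θ (A x - A y) (B x - B y) := by
    conv_lhs => rw [h.1 x, h.1 y]
    simp only [mk, map_sub]; ring
  have := h.2 _ _ _ this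
  exact ⟨this.1.symm, this.2.symm⟩

lemma A_algMul (t : F) (x : E) :
    A (algebraMap F E t * x) = t * A x ∧ B (algebraMap F E t * x) = t * B x := by
  have : algebraMap F E t * x = mk θ (t * A x) (t * B x) := by
    conv_lhs => rw [h.1 x]
    simp only [mk, map_mul]; ring
  have := h.2 _ _ _ this
  exact ⟨this.1.symm, this.2.symm⟩

include hθ in
lemma A_mul (x y : E) :
    A (x * y) = A x * A y - N * (B x * B y) ∧
      B (x * y) = A x * B y + A y * B x + T * (B x * B y) := by
  have : x * y = mk θ (A x * A y - N * (B x * B y)) (A x * B y + A y * B x + T * (B x * B y)) := by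
    conv_lhs => rw [h.1 x, h.1 y]
    simp only [mk, map_add, map_mul, map_sub]
    linear_combination (algebraMap F E (B x) * algebraMap F E (B y)) * hθ
  have := h.2 _ _ _ this
  exact ⟨this.1.symm, this.2.symm⟩

omit h in
include hcθ in
lemma c_mk (a b : F) : c (mk θ a b) = mk θ (a + T * b) (-b) := by
  simp only [mk, map_add, map_mul, map_neg, AlgEquiv.commutes, hcθ]
  ring

include hcθ in
lemma A_c (x : E) : A (c x) = A x + T * B x ∧ B (c x) = -B x := by
  have h1 : c x = mk θ (A x + T * B x) (-B x) := by
    conv_lhs => rw [h.1 x]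
    exact c_mk c hcθ _ _
  have := h.2 _ _ _ h1
  exact ⟨this.1.symm, this.2.symm⟩

include hcθ in
lemma c_c (x : E) : c (c x) = x := by
  conv_lhs => rw [h.1 x, c_mk c hcθ, c_mk c hcθ]
  conv_rhs => rw [h.1 x]
  simp only [mk, neg_neg, map_add, map_mul, map_neg]
  ring

omit h in
include hθ hcθ in
lemma mk_norm (a b : F) :
    mk θ a b * c (mk θ a b) = algebraMap F E (a ^ 2 + T * (a * b) + N * b ^ 2) := by
  rw [c_mk c hcθ]
  simp only [mk, map_add, map_mul, map_neg, map_pow]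
  linear_combination (-(algebraMap F E b) ^ 2) * hθ

include hθ hcθ in
lemma norm_eq (x : E) : x * c x = algebraMap F E (qF T N A B x) := by
  conv_lhs => rw [h.1 x]
  exact mk_norm hθ c hcθ _ _

lemma inOE_iff (O : Subring F) (x : E) : inOE F E O θ x ↔ A x ∈ O ∧ B x ∈ O := by
  constructor
  · rintro ⟨a, ha, b, hb, hx⟩
    obtain ⟨h1, h2⟩ := h.2 x a b hx
    exact ⟨h1 ▸ ha, h2 ▸ hb⟩
  · rintro ⟨ha, hb⟩
    exact ⟨A x, ha, B x, hb, h.1 x⟩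

include hι

lemma ι_eq (x : E) : ι x = !![A x + B x * T, B x * N; -(B x), A x] := by
  conv_lhs => rw [h.1 x]
  exact hι _ _

lemma ι_one : ι 1 = 1 := by
  rw [ι_eq h hι, (A_one h).1, (A_one h).2, Matrix.one_fin_two, mat2_eq_iff]
  norm_num

lemma ι_add (x y : E) : ι (x + y) = ι x + ι y := by
  rw [ι_eq h hι, ι_eq h hι x, ι_eq h hι y, (A_add h x y).1, (A_add h x y).2, add_fin_two,
    mat2_eq_iff]
  refine ⟨by ring, by ring, by ring, by ring⟩

include hθ in
lemma ι_mul (x y : E) : ι (x * y) = ι x * ι y := by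
  rw [ι_eq h hι, ι_eq h hι x, ι_eq h hι y, (A_mul h hθ x y).1, (A_mul h hθ x y).2,
    Matrix.mul_fin_two, mat2_eq_iff]
  refine ⟨by ring, by ring, by ring, by ring⟩

lemma ι_smul (t : F) (x : E) : ι (algebraMap F E t * x) = t • ι x := by
  have hmk : algebraMap F E t * x = mk θ (t * A x) (t * B x) := by
    conv_lhs => rw [h.1 x]
    simp only [mk, map_mul]; ring
  rw [hmk, show ι (mk θ (t * A x) (t * B x)) = _ from hι _ _, ι_eq h hι, smul_fin_two,
    mat2_eq_iff]
  refine ⟨by ring, by ring, by ring, by ring⟩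

lemma sum_eq (x y : E) :
    ι x + jmat T * ι y =
      !![A x + B x * T + A y, B x * N + (B y * N + T * A y); B y - B x, A x - A y] := by
  rw [ι_eq h hι x, ι_eq h hι y, jmat, Matrix.mul_fin_two, add_fin_two, mat2_eq_iff]
  refine ⟨by ring, by ring, by ring, by ring⟩

lemma det_sum (x y : E) :
    (ι x + jmat T * ι y).det = qF T N A B x - qF T N A B y := by
  rw [sum_eq h hι, Matrix.det_fin_two_of, qF, qF]
  ring

lemma uniq_decomp (hd : T ^ 2 - 4 * N ≠ 0) (x y x' y' : E)
    (heq : ι x + jmat T * ι y = ι x' + jmat T * ι y') : x = x' ∧ y = y' := by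
  rw [sum_eq h hι, sum_eq h hι, mat2_eq_iff] at heq
  obtain ⟨e1, e2, e3, e4⟩ := heq
  have hBx : B x = B x' := by
    have h5 : (B x - B x') * (T ^ 2 - 4 * N) = 0 := by
      linear_combination T * e1 - 2 * e2 - T * e4 + 2 * N * e3
    have := mul_eq_zero.mp h5
    rcases this with h6 | h6
    · exact sub_eq_zero.mp h6
    · exact absurd h6 hd
  have hBy : B y = B y' := by
    have := sub_eq_zero.mp (by linear_combination e3 + (sub_eq_zero.mpr hBx) : B y - B y' = 0)
    exact this
  have hAy : A y = A y' := by
    have h5 : (A y - A y') * (T ^ 2 - 4 * N) = 0 := by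
      linear_combination T * e2 - 2 * N * e1 + 2 * N * e4 - T * N * hBx - T * N * hBy
        + 2 * N * T * hBx
    rcases mul_eq_zero.mp h5 with h6 | h6
    · exact sub_eq_zero.mp h6
    · exact absurd h6 hd
  have hAx : A x = A x' := by linear_combination e4 + hAy
  exact ⟨rep_ext h hAx hBx, rep_ext h hAy hBy⟩

include hθ hcθ in
lemma mul_decomp (w₁ w₂ z₁ z₂ : E) :
    (ι w₁ + jmat T * ι w₂) * (ι z₁ + jmat T * ι z₂) =
      ι (w₁ * z₁ + c w₂ * z₂) + jmat T * ι (c w₁ * z₂ + w₂ * z₁) := by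
  have hAa : ∀ x y : E, A (x + y) = A x + A y := fun x y => (A_add h x y).1
  have hBa : ∀ x y : E, B (x + y) = B x + B y := fun x y => (A_add h x y).2
  have hAm : ∀ x y : E, A (x * y) = A x * A y - N * (B x * B y) := fun x y => (A_mul h hθ x y).1
  have hBm : ∀ x y : E, B (x * y) = A x * B y + A y * B x + T * (B x * B y) :=
    fun x y => (A_mul h hθ x y).2
  have hAc : ∀ x : E, A (c x) = A x + T * B x := fun x => (A_c h c hcθ x).1
  have hBc : ∀ x : E, B (c x) = -B x := fun x => (A_c h c hcθ x).2
  rw [sum_eq h hι, sum_eq h hι, sum_eq h hι, Matrix.mul_fin_two, mat2_eq_iff]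
  simp only [hAa, hBa, hAm, hBm, hAc, hBc]
  refine ⟨by ring, by ring, by ring, by ring⟩

end Rep

section DVR

variable {F : Type*} [Field F] (O : Subring F) [IsDomain O] [IsDiscreteValuationRing O]
  (ϖ : O) (hϖ : Irreducible ϖ)

include hϖ in
lemma isUnit_one_add_pow {k : ℕ} (hk : 1 ≤ k) (t : O) : IsUnit (1 + ϖ ^ k * t) := by
  have hnu : ¬IsUnit (ϖ ^ k * t) := by
    intro hu
    obtain ⟨k', rfl⟩ := Nat.exists_eq_add_of_le hk
    rw [pow_add, pow_one, mul_assoc] at hu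
    exact hϖ.not_isUnit (isUnit_of_mul_isUnit_left hu)
  have := IsLocalRing.isUnit_one_sub_self_of_mem_nonunits (-(ϖ ^ k * t))
    (by rwa [mem_nonunits_iff, IsUnit.neg_iff])
  rwa [sub_neg_eq_add] at this

omit [IsDomain ↥O] [IsDiscreteValuationRing ↥O] in
lemma exists_inv {e : O} (he : IsUnit e) :
    ∃ e' : O, (e : F) * (e' : F) = 1 := by
  obtain ⟨ν, rfl⟩ := he
  refine ⟨↑ν⁻¹, ?_⟩
  have h1 : ((ν : O) * (↑ν⁻¹ : O) : O) = 1 := by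
    rw [← Units.val_mul, mul_inv_cancel, Units.val_one]
  calc ((ν : O) : F) * ((↑ν⁻¹ : O) : F) = (((ν : O) * (↑ν⁻¹ : O) : O) : F) := by push_cast; ring
    _ = 1 := by rw [h1]; norm_num

end DVR

section UT

variable {F : Type*} [Field F] (O : Subring F) [IsDomain O] [IsDiscreteValuationRing O]
  (ϖ : O) (hϖ : Irreducible ϖ) (r : ℕ) (hr : 1 ≤ r)

omit [IsDomain ↥O] [IsDiscreteValuationRing ↥O] in
lemma U_one : (1 : Matrix (Fin 2) (Fin 2) F) ∈ Utilde F O (ϖ : F) r :=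
  ⟨0, fun _ _ => zero_mem O, by simp⟩

omit [IsDomain ↥O] [IsDiscreteValuationRing ↥O] in
lemma U_mul {u v : Matrix (Fin 2) (Fin 2) F} (hu : u ∈ Utilde F O (ϖ : F) r)
    (hv : v ∈ Utilde F O (ϖ : F) r) : u * v ∈ Utilde F O (ϖ : F) r := by
  obtain ⟨n, hn, rfl⟩ := hu
  obtain ⟨m, hm, rfl⟩ := hv
  refine ⟨n + m + (ϖ : F) ^ r • (n * m), fun i j => ?_, ?_⟩
  · have heq : (n + m + (ϖ : F) ^ r • (n * m)) i j
        = n i j + m i j + (ϖ : F) ^ r * (n i 0 * m 0 j + n i 1 * m 1 j) := by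
      simp [Matrix.add_apply, Matrix.smul_apply, Matrix.mul_apply, Fin.sum_univ_two,
        smul_eq_mul]
    rw [heq]
    have hπ : ((ϖ : F)) ∈ O := SetLike.coe_mem ϖ
    exact add_mem (add_mem (hn i j) (hm i j))
      (mul_mem (pow_mem hπ r)
        (add_mem (mul_mem (hn i 0) (hm 0 j)) (mul_mem (hn i 1) (hm 1 j))))
  · have key : (1 + (ϖ : F) ^ r • n) * ((ϖ : F) ^ r • m)
        = (ϖ : F) ^ r • m + (ϖ : F) ^ r • ((ϖ : F) ^ r • (n * m)) := by
      rw [add_mul, one_mul, Matrix.smul_mul, Matrix.mul_smul, smul_comm]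
    rw [mul_add, mul_one, key, smul_add, smul_add]
    abel

include hϖ hr in
lemma U_inv {u : Matrix (Fin 2) (Fin 2) F} (hu : u ∈ Utilde F O (ϖ : F) r) :
    ∃ v ∈ Utilde F O (ϖ : F) r, u * v = 1 ∧ v * u = 1 := by
  obtain ⟨n, hn, rfl⟩ := hu
  set nO : Matrix (Fin 2) (Fin 2) O := Matrix.of (fun i j => (⟨n i j, hn i j⟩ : O)) with hnO
  set uO : Matrix (Fin 2) (Fin 2) O := 1 + ϖ ^ r • nO with huO
  have hdet : IsUnit uO.det := by
    have heq : uO.det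
        = 1 + ϖ ^ r * (nO 0 0 + nO 1 1 + ϖ ^ r * (nO 0 0 * nO 1 1 - nO 0 1 * nO 1 0)) := by
      rw [Matrix.det_fin_two]
      simp only [huO, Matrix.add_apply, Matrix.smul_apply, Matrix.one_apply, smul_eq_mul]
      norm_num
      ring
    rw [heq]
    exact isUnit_one_add_pow O ϖ hϖ hr _
  haveI := uO.invertibleOfIsUnitDet hdet
  obtain ⟨v, hv1, hv2⟩ : ∃ v, uO * v = 1 ∧ v * uO = 1 :=
    ⟨⅟uO, mul_invOf_self _, invOf_mul_self _⟩
  rw [huO] at hv1 hv2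
  have h4 : v + ϖ ^ r • (nO * v) = 1 := by
    rw [← hv1, add_mul, one_mul, Matrix.smul_mul]
  have h3 : v = 1 + ϖ ^ r • (-(nO * v)) := by
    rw [smul_neg, ← h4]; abel
  refine ⟨v.map O.subtype, ⟨(-(nO * v)).map O.subtype, fun i j => by simp only [Matrix.map_apply]; exact SetLike.coe_mem ((-(nO * v)) i j), ?_⟩, ?_, ?_⟩
  · have h5 : ∀ i j, v i j = (1 + ϖ ^ r • (-(nO * v))) i j := fun i j => by rw [← h3]
    ext i j
    rw [Matrix.map_apply, h5 i j]
    simp only [Matrix.add_apply, Matrix.smul_apply, Matrix.one_apply, Matrix.map_apply,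
      smul_eq_mul, map_add, map_mul, map_pow, apply_ite (O.subtype), map_one, map_zero]
    rfl
  · have humap : (1 : Matrix (Fin 2) (Fin 2) F) + (ϖ : F) ^ r • n
        = (1 + ϖ ^ r • nO : Matrix (Fin 2) (Fin 2) O).map O.subtype := by
      ext i j
      simp only [Matrix.map_apply, Matrix.add_apply, Matrix.smul_apply, Matrix.one_apply,
        smul_eq_mul, map_add, map_mul, map_pow, apply_ite (O.subtype), map_one, map_zero, hnO]
      rfl
    rw [humap, ← Matrix.map_mul, hv1, Matrix.map_one _ (map_zero _) (map_one _)]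
  · have humap : (1 : Matrix (Fin 2) (Fin 2) F) + (ϖ : F) ^ r • n
        = (1 + ϖ ^ r • nO : Matrix (Fin 2) (Fin 2) O).map O.subtype := by
      ext i j
      simp only [Matrix.map_apply, Matrix.add_apply, Matrix.smul_apply, Matrix.one_apply,
        smul_eq_mul, map_add, map_mul, map_pow, apply_ite (O.subtype), map_one, map_zero, hnO]
      rfl
    rw [humap, ← Matrix.map_mul, hv2, Matrix.map_one _ (map_zero _) (map_one _)]

include hϖ hr in
lemma rc_eq_of_mem {x u : Matrix (Fin 2) (Fin 2) F} (hu : u ∈ Utilde F O (ϖ : F) r) :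
    rightCoset' F O (ϖ : F) r (x * u) = rightCoset' F O (ϖ : F) r x := by
  ext m
  constructor
  · rintro ⟨v, hv, rfl⟩
    exact ⟨u * v, U_mul O ϖ r hu hv, mul_assoc _ _ _⟩
  · rintro ⟨v, hv, rfl⟩
    obtain ⟨z, hz, hz1, hz2⟩ := U_inv O ϖ hϖ r hr hu
    exact ⟨z * v, U_mul O ϖ r hz hv, by rw [← mul_assoc, mul_assoc x u z, hz1, mul_one]⟩

omit [IsDomain ↥O] [IsDiscreteValuationRing ↥O] in
lemma rc_self (x : Matrix (Fin 2) (Fin 2) F) : x ∈ rightCoset' F O (ϖ : F) r x :=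
  ⟨1, U_one O ϖ r, (mul_one x).symm⟩

end UT


end L42

/-- **Lemma 4.2: right-coset classification of `Ξ(ϖ^r)_a`.**
In the setting of the orthogonal decomposition of `M₂(F)` (with `F` the fraction field of a
discrete valuation ring `O_F ∋ T, N` with uniformizer `ϖ`, `E = F(θ)`, `O_E = O_F + θ O_F`,
`q = N_{E/F}`, and assuming `M₂(O_F) = ι(O_E) + j·ι(O_E)`), let `r ≥ 1`, and let `a ∈ F^×`
with `v(a) = s ≥ r`.  Writing `x(b) := 1 + j·ι(b)`:
(1) for every `b ∈ O_E` with `q(b) ∈ 1 − a(1 + ϖ^r O_F)`, the element `x(b)` lies in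
`Ξ(ϖ^r)_a`;
(2) every `x ∈ Ξ(ϖ^r)_a` lies in `x(b)·Ũ` for some such `b`;
(3) for such `b, b'` one has `x(b)·Ũ = x(b')·Ũ` if and only if `b − b' ∈ ϖ^{r+s} O_E`;
(4) consequently, `b ↦ x(b)·Ũ` induces a bijection from the quotient of
`{b ∈ O_E : q(b) ∈ 1 − a(1 + ϖ^r O_F)}` by the multiplication action of `1 + ϖ^{r+s} O_E`
onto the set of right cosets `{x·Ũ : x ∈ Ξ(ϖ^r)_a}`. -/
theorem xi_a_right_coset_classification
    (F E : Type*) [Field F] [Field E] [Algebra F E]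
    (T N : F) (θ : E)
    (hθ : θ ^ 2 = algebraMap F E T * θ - algebraMap F E N)
    (hrep : ∀ x : E, ∃! p : F × F, x = algebraMap F E p.1 + θ * algebraMap F E p.2)
    (c : E ≃ₐ[F] E)
    (hcθ : c θ = algebraMap F E T - θ)
    (hsep : algebraMap F E T - θ ≠ θ)
    (ι : E → Matrix (Fin 2) (Fin 2) F)
    (hι : ∀ a b : F, ι (algebraMap F E a + θ * algebraMap F E b) = !![a + b * T, b * N; -b, a])
    (O : Subring F) [IsDomain O] [IsDiscreteValuationRing O]
    (hfrac : ∀ x : F, ∃ y z : O, (z : F) ≠ 0 ∧ x * (z : F) = (y : F))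
    (ϖ : O) (hϖ : Irreducible ϖ)
    (hT : T ∈ O) (hN : N ∈ O)
    (hM2 : ∀ m : Matrix (Fin 2) (Fin 2) F, (∀ i j, m i j ∈ O) →
      ∃ x₁ x₂ : E, inOE F E O θ x₁ ∧ inOE F E O θ x₂ ∧ m = ι x₁ + jmat T * ι x₂)
    (r : ℕ) (hr : 1 ≤ r)
    (a : F) (s : ℕ) (hs : r ≤ s)
    (ha : ∃ w : Oˣ, a = (ϖ : F) ^ s * ((w : O) : F)) :
    -- (1)
    (∀ b : E, inOE F E O θ b →
      (∃ u ∈ O, b * c b = algebraMap F E (1 - a * (1 + (ϖ : F) ^ r * u))) →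
      (1 + jmat T * ι b) ∈ XiSetA F E O θ T (⇑c) ι (ϖ : F) r a) ∧
    -- (2)
    (∀ x ∈ XiSetA F E O θ T (⇑c) ι (ϖ : F) r a,
      ∃ b : E, inOE F E O θ b ∧
        (∃ u ∈ O, b * c b = algebraMap F E (1 - a * (1 + (ϖ : F) ^ r * u))) ∧
        x ∈ rightCoset' F O (ϖ : F) r (1 + jmat T * ι b)) ∧
    -- (3)
    (∀ b b' : E, inOE F E O θ b →
      (∃ u ∈ O, b * c b = algebraMap F E (1 - a * (1 + (ϖ : F) ^ r * u))) →
      inOE F E O θ b' →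
      (∃ u ∈ O, b' * c b' = algebraMap F E (1 - a * (1 + (ϖ : F) ^ r * u))) →
      (rightCoset' F O (ϖ : F) r (1 + jmat T * ι b) =
        rightCoset' F O (ϖ : F) r (1 + jmat T * ι b') ↔
        ∃ y : E, inOE F E O θ y ∧ b - b' = algebraMap F E ((ϖ : F) ^ (r + s)) * y)) ∧
    -- (4)
    (∀ b b' : E, inOE F E O θ b →
      (∃ u ∈ O, b * c b = algebraMap F E (1 - a * (1 + (ϖ : F) ^ r * u))) →
      inOE F E O θ b' →
      (∃ u ∈ O, b' * c b' = algebraMap F E (1 - a * (1 + (ϖ : F) ^ r * u))) →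
      (rightCoset' F O (ϖ : F) r (1 + jmat T * ι b) =
        rightCoset' F O (ϖ : F) r (1 + jmat T * ι b') ↔
        ∃ g : E, (∃ y : E, inOE F E O θ y ∧ g = 1 + algebraMap F E ((ϖ : F) ^ (r + s)) * y) ∧
          b' = b * g)) := by
  classical
  choose p hp hup using hrep
  set A : E → F := fun x => (p x).1 with hA
  set B : E → F := fun x => (p x).2 with hB
  have hRep : L42.Rep θ A B := by
    refine ⟨fun x => hp x, fun x a b hx => ?_⟩
    have h2 := hup x (a, b) hx
    exact ⟨congrArg Prod.fst h2, congrArg Prod.snd h2⟩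
  have halginj : Function.Injective (algebraMap F E) := (algebraMap F E).injective
  have hπO : ((ϖ : F)) ∈ O := SetLike.coe_mem ϖ
  obtain ⟨w, ha⟩ := ha
  have hd : T ^ 2 - 4 * N ≠ 0 := by
    intro h0
    apply sub_ne_zero.mpr hsep
    have hsq : (algebraMap F E T - θ - θ) ^ 2 = algebraMap F E (T ^ 2 - 4 * N) := by
      rw [map_sub, map_pow, map_mul, map_ofNat]
      linear_combination (4 : E) * hθ
    rw [h0, map_zero] at hsq
    exact (pow_eq_zero_iff (by norm_num : (2:ℕ) ≠ 0)).mp hsq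
  have hsplit : ∀ u : F, u ∈ O → ∃ u' : F, u' ∈ O ∧
      1 - a * (1 + (ϖ : F) ^ r * u) = 1 + (ϖ : F) ^ r * u' := by
    intro u hu
    refine ⟨-((ϖ : F) ^ (s - r) * ((w : O) : F) * (1 + (ϖ : F) ^ r * u)),
      neg_mem (mul_mem (mul_mem (pow_mem hπO _) (SetLike.coe_mem _))
        (add_mem (one_mem O) (mul_mem (pow_mem hπO r) hu))), ?_⟩
    have hpow : (ϖ : F) ^ s = (ϖ : F) ^ r * (ϖ : F) ^ (s - r) := by
      rw [← pow_add, Nat.add_sub_cancel' hs]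
    rw [ha, hpow]; ring
  have hεfact : ∀ u : F, u ∈ O → ∃ ε : O, IsUnit ε ∧
      a * (1 + (ϖ : F) ^ r * u) = (ϖ : F) ^ s * (ε : F) := by
    intro u hu
    refine ⟨(w : O) * (1 + ϖ ^ r * ⟨u, hu⟩), (Units.isUnit w).mul
      (L42.isUnit_one_add_pow O ϖ hϖ hr _), ?_⟩
    rw [ha]; push_cast; ring
  have hqF : ∀ (x : E) (u' : F), x * c x = algebraMap F E u' → L42.qF T N A B x = u' := by
    intro x u' hx
    apply halginj
    rw [← L42.norm_eq hRep hθ c hcθ x, hx]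
  have hxb : ∀ b : E, (1 : Matrix (Fin 2) (Fin 2) F) + jmat T * ι b = ι 1 + jmat T * ι b := by
    intro b; rw [L42.ι_one hRep hι]
  have hmemA : ∀ x : E, inOE F E O θ x ↔ A x ∈ O ∧ B x ∈ O := fun x => L42.inOE_iff hRep O x
  have hOE_mul : ∀ x y : E, inOE F E O θ x → inOE F E O θ y → inOE F E O θ (x * y) := by
    intro x y hx hy
    obtain ⟨h1, h2⟩ := (hmemA x).mp hx
    obtain ⟨h3, h4⟩ := (hmemA y).mp hy
    refine (hmemA _).mpr ⟨?_, ?_⟩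
    · rw [(L42.A_mul hRep hθ x y).1]
      exact sub_mem (mul_mem h1 h3) (mul_mem hN (mul_mem h2 h4))
    · rw [(L42.A_mul hRep hθ x y).2]
      exact add_mem (add_mem (mul_mem h1 h4) (mul_mem h3 h2)) (mul_mem hT (mul_mem h2 h4))
  have hOE_c : ∀ x : E, inOE F E O θ x → inOE F E O θ (c x) := by
    intro x hx
    obtain ⟨h1, h2⟩ := (hmemA x).mp hx
    refine (hmemA _).mpr ⟨?_, ?_⟩
    · rw [(L42.A_c hRep c hcθ x).1]; exact add_mem h1 (mul_mem hT h2)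
    · rw [(L42.A_c hRep c hcθ x).2]; exact neg_mem h2
  have hOE_alg : ∀ t : F, t ∈ O → inOE F E O θ (algebraMap F E t) :=
    fun t ht => ⟨t, ht, 0, zero_mem O, by simp [L42.mk]⟩
  have hOE_add : ∀ x y : E, inOE F E O θ x → inOE F E O θ y → inOE F E O θ (x + y) := by
    intro x y hx hy
    obtain ⟨h1, h2⟩ := (hmemA x).mp hx
    obtain ⟨h3, h4⟩ := (hmemA y).mp hy
    refine (hmemA _).mpr ⟨?_, ?_⟩
    · rw [(L42.A_add hRep x y).1]; exact add_mem h1 h3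
    · rw [(L42.A_add hRep x y).2]; exact add_mem h2 h4
  have hOE_one : inOE F E O θ 1 := ⟨1, one_mem O, 0, zero_mem O, by simp⟩
  have hιmem : ∀ x : E, inOE F E O θ x → ∀ i j, ι x i j ∈ O := by
    intro x hx i j
    obtain ⟨h1, h2⟩ := (hmemA x).mp hx
    rw [L42.ι_eq hRep hι]
    fin_cases i <;> fin_cases j <;> simp
    · exact add_mem h1 (mul_mem h2 hT)
    · exact mul_mem h2 hN
    · exact h2
    · exact h1
  have hOE_neg : ∀ x : E, inOE F E O θ x → inOE F E O θ (-x) := by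
    intro x hx
    have h10 := hOE_mul _ _ (hOE_alg (-1) (neg_mem (one_mem O))) hx
    rwa [map_neg, map_one, neg_one_mul] at h10
  have hsummem : ∀ x y : E, inOE F E O θ x → inOE F E O θ y →
      ∀ i j, (ι x + jmat T * ι y) i j ∈ O := by
    intro x y hx hy i j
    obtain ⟨h1, h2⟩ := (hmemA x).mp hx
    obtain ⟨h3, h4⟩ := (hmemA y).mp hy
    rw [L42.sum_eq hRep hι]
    fin_cases i <;> fin_cases j <;> simp
    · exact add_mem (add_mem h1 (mul_mem h2 hT)) h3
    · exact add_mem (mul_mem h2 hN) (add_mem (mul_mem h4 hN) (mul_mem hT h3))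
    · exact sub_mem h4 h2
    · exact sub_mem h1 h3
  have hexp : ∀ m₁ m₂ : E, (1 : Matrix (Fin 2) (Fin 2) F) + (ϖ : F) ^ r • (ι m₁ + jmat T * ι m₂)
      = ι (1 + algebraMap F E ((ϖ : F) ^ r) * m₁)
        + jmat T * ι (algebraMap F E ((ϖ : F) ^ r) * m₂) := by
    intro m₁ m₂
    rw [L42.ι_add hRep hι, L42.ι_one hRep hι, L42.ι_smul hRep hι, L42.ι_smul hRep hι,
      Matrix.mul_smul, smul_add]
    abel
  have hpart3 : ∀ b b' : E, inOE F E O θ b →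
      (∃ u ∈ O, b * c b = algebraMap F E (1 - a * (1 + (ϖ : F) ^ r * u))) →
      inOE F E O θ b' →
      (∃ u ∈ O, b' * c b' = algebraMap F E (1 - a * (1 + (ϖ : F) ^ r * u))) →
      (rightCoset' F O (ϖ : F) r (1 + jmat T * ι b) =
        rightCoset' F O (ϖ : F) r (1 + jmat T * ι b') ↔
        ∃ y : E, inOE F E O θ y ∧ b - b' = algebraMap F E ((ϖ : F) ^ (r + s)) * y) := by
    rintro b b' hb ⟨u, hu, hqbE⟩ hb' _
    obtain ⟨ε, hεu, hεeq⟩ := hεfact u hu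
    have hnb' : (1 : E) - b * c b = algebraMap F E ((ϖ : F) ^ s) * algebraMap F E ((ε : F)) := by
      rw [hqbE, ← map_mul, ← hεeq, map_sub, map_one]
      ring
    constructor
    · intro hceq
      have hmem : (1 + jmat T * ι b') ∈ rightCoset' F O (ϖ : F) r (1 + jmat T * ι b) := by
        rw [hceq]; exact L42.rc_self O ϖ r _
      obtain ⟨v, hv, heq⟩ := hmem
      obtain ⟨n, hn, rfl⟩ := hv
      obtain ⟨m₁, m₂, hm₁, hm₂, hndec⟩ := hM2 n hn
      rw [hndec] at heq
      rw [hexp m₁ m₂, hxb b, hxb b', L42.mul_decomp hRep hθ c hcθ hι] at heq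
      obtain ⟨h1, h2⟩ := L42.uniq_decomp hRep hι hd _ _ _ _ heq
      rw [one_mul] at h1
      rw [map_one, one_mul] at h2
      have hdiff : b - b' = algebraMap F E ((ϖ : F) ^ (r + s))
          * (-(m₂ * algebraMap F E ((ε : F)))) := by
        rw [pow_add, map_mul]
        linear_combination (-1 : E) * h2 + b * h1
          - (algebraMap F E ((ϖ : F) ^ r) * m₂) * hnb'
      exact ⟨-(m₂ * algebraMap F E ((ε : F))),
        hOE_neg _ (hOE_mul _ _ hm₂ (hOE_alg _ (SetLike.coe_mem ε))), hdiff⟩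
    · rintro ⟨y, hyO, hdiff⟩
      obtain ⟨ε', hεinv⟩ := L42.exists_inv O hεu
      have hεinvE : algebraMap F E ((ε : F)) * algebraMap F E ((ε' : F)) = 1 := by
        rw [← map_mul, hεinv, map_one]
      set m₂ : E := -(algebraMap F E ((ε' : F)) * y) with hm₂def
      set m₁ : E := -(c b * m₂) with hm₁def
      have hm₂O : inOE F E O θ m₂ :=
        hOE_neg _ (hOE_mul _ _ (hOE_alg _ (SetLike.coe_mem ε')) hyO)
      have hm₁O : inOE F E O θ m₁ := hOE_neg _ (hOE_mul _ _ (hOE_c _ hb) hm₂O)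
      have hdiff' : b - b' = algebraMap F E ((ϖ : F) ^ r) * algebraMap F E ((ϖ : F) ^ s) * y := by
        rw [← map_mul, ← pow_add]; exact hdiff
      have hz₁ : (1 + algebraMap F E ((ϖ : F) ^ r) * m₁)
          + c b * (algebraMap F E ((ϖ : F) ^ r) * m₂) = 1 := by
        rw [hm₁def]; ring
      have hz₂ : algebraMap F E ((ϖ : F) ^ r) * m₂
          + b * (1 + algebraMap F E ((ϖ : F) ^ r) * m₁) = b' := by
        rw [hm₁def, hm₂def]
        linear_combination hdiff'
          - (algebraMap F E ((ϖ : F) ^ r) * algebraMap F E ((ε' : F)) * y) * hnb'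
          - (algebraMap F E ((ϖ : F) ^ s) * algebraMap F E ((ϖ : F) ^ r) * y) * hεinvE
      have hxbu : (1 + jmat T * ι b) * (1 + (ϖ : F) ^ r • (ι m₁ + jmat T * ι m₂))
          = 1 + jmat T * ι b' := by
        rw [hexp m₁ m₂, hxb b, hxb b', L42.mul_decomp hRep hθ c hcθ hι, one_mul, map_one,
          one_mul, hz₁, hz₂]
      have humem : (1 : Matrix (Fin 2) (Fin 2) F) + (ϖ : F) ^ r • (ι m₁ + jmat T * ι m₂)
          ∈ Utilde F O (ϖ : F) r := ⟨ι m₁ + jmat T * ι m₂, hsummem m₁ m₂ hm₁O hm₂O, rfl⟩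
      rw [← hxbu]
      exact (L42.rc_eq_of_mem O ϖ hϖ r hr humem).symm
  refine ⟨?_, ?_, hpart3, ?_⟩
  -- Part (1)
  · rintro b hb ⟨u, hu, hqb⟩
    obtain ⟨u', hu', hsp⟩ := hsplit u hu
    refine ⟨⟨1, b, ⟨0, ⟨0, zero_mem O, 0, zero_mem O, by simp⟩, by simp⟩, hb,
      ⟨u', hu', by rw [hqb, hsp]⟩, hxb b⟩, u, hu, ?_⟩
    rw [hxb b, L42.det_sum hRep hι]
    have hq1 : L42.qF T N A B 1 = 1 := by
      rw [L42.qF, (L42.A_one hRep).1, (L42.A_one hRep).2]; ring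
    have hqb' : L42.qF T N A B b = 1 - a * (1 + (ϖ : F) ^ r * u) := hqF b _ hqb
    rw [hq1, hqb']; ring
  -- Part (2)
  · rintro x ⟨⟨x₁, x₂, ⟨y, hy, hx₁⟩, hx₂, ⟨u₂, hu₂, hq₂⟩, hxeq⟩, u₃, hu₃, hdet⟩
    obtain ⟨hyA, hyB⟩ := (hmemA y).mp hy
    have hx₁A : A x₁ = 1 + (ϖ : F) ^ r * A y := by
      rw [hx₁, (L42.A_add hRep 1 _).1, (L42.A_one hRep).1, (L42.A_algMul hRep _ y).1]
    have hx₁B : B x₁ = (ϖ : F) ^ r * B y := by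
      rw [hx₁, (L42.A_add hRep 1 _).2, (L42.A_one hRep).2, (L42.A_algMul hRep _ y).2, zero_add]
    set tF : F := 2 * A y + (ϖ : F) ^ r * (A y) ^ 2 + T * B y + (ϖ : F) ^ r * T * (A y * B y)
      + (ϖ : F) ^ r * N * (B y) ^ 2 with htF
    have htO : tF ∈ O := by
      refine add_mem (add_mem (add_mem (add_mem ?_ ?_) ?_) ?_) ?_
      · exact mul_mem (by rw [show (2:F) = 1 + 1 by norm_num]; exact add_mem (one_mem O) (one_mem O)) hyA
      · exact mul_mem (pow_mem hπO r) (pow_mem hyA 2)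
      · exact mul_mem hT hyB
      · exact mul_mem (mul_mem (pow_mem hπO r) hT) (mul_mem hyA hyB)
      · exact mul_mem (mul_mem (pow_mem hπO r) hN) (pow_mem hyB 2)
    have hqx₁ : L42.qF T N A B x₁ = 1 + (ϖ : F) ^ r * tF := by
      rw [L42.qF, hx₁A, hx₁B, htF]; ring
    have hqx₂ : L42.qF T N A B x₂ = 1 + (ϖ : F) ^ r * u₂ := hqF x₂ _ hq₂
    have heunit : IsUnit ((1 : O) + ϖ ^ r * ⟨tF, htO⟩) := L42.isUnit_one_add_pow O ϖ hϖ hr _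
    obtain ⟨e', he'⟩ := L42.exists_inv O heunit
    have he'F : (1 + (ϖ : F) ^ r * tF) * (e' : F) = 1 := by
      have hcoe : (((1 + ϖ ^ r * ⟨tF, htO⟩ : O)) : F) = 1 + (ϖ : F) ^ r * tF := by
        push_cast; ring
      rw [← hcoe]; exact he'
    have hdet' : L42.qF T N A B x₁ - L42.qF T N A B x₂ = a * (1 + (ϖ : F) ^ r * u₃) := by
      rw [← L42.det_sum hRep hι, ← hxeq]; exact hdet
    have hΔ : (1 : F) + (ϖ : F) ^ r * u₂
        = (1 + (ϖ : F) ^ r * tF) - a * (1 + (ϖ : F) ^ r * u₃) := by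
      linear_combination hqx₁ - hqx₂ - hdet'
    set b := algebraMap F E ((e' : F)) * (x₂ * c x₁) with hbdef
    have hx₁O : inOE F E O θ x₁ := by
      rw [hx₁]
      exact hOE_add _ _ hOE_one (hOE_mul _ _ (hOE_alg _ (pow_mem hπO r)) hy)
    have hbO : inOE F E O θ b :=
      hOE_mul _ _ (hOE_alg _ (SetLike.coe_mem e')) (hOE_mul _ _ hx₂ (hOE_c _ hx₁O))
    have hcb : c b = algebraMap F E ((e' : F)) * (c x₂ * x₁) := by
      rw [hbdef, map_mul, map_mul, AlgEquiv.commutes, L42.c_c hRep c hcθ x₁]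
    have hq₁E : x₁ * c x₁ = algebraMap F E (1 + (ϖ : F) ^ r * tF) := by
      rw [L42.norm_eq hRep hθ c hcθ x₁, hqx₁]
    set u₀ : F := (u₃ - tF) * (e' : F) with hu₀
    have hu₀O : u₀ ∈ O := mul_mem (sub_mem hu₃ htO) (SetLike.coe_mem e')
    have hFid : (e' : F) * (e' : F) * ((1 + (ϖ : F) ^ r * u₂) * (1 + (ϖ : F) ^ r * tF))
        = 1 - a * (1 + (ϖ : F) ^ r * u₀) := by
      have hk := he'F
      linear_combination ((e' : F) * (e' : F) * (1 + (ϖ : F) ^ r * tF)) * hΔ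
        + (2 + ((1 + (ϖ : F) ^ r * tF) * (e' : F) - 1)
          - a * ((e' : F) + (ϖ : F) ^ r * u₃ * (e' : F)) - a) * hk
    have hbnorm : b * c b = algebraMap F E (1 - a * (1 + (ϖ : F) ^ r * u₀)) := by
      have h0 : b * c b = algebraMap F E ((e' : F)) * algebraMap F E ((e' : F))
          * ((x₂ * c x₂) * (x₁ * c x₁)) := by
        rw [hbdef, hcb]; ring
      rw [h0, hq₂, hq₁E]
      simp only [← map_mul]
      rw [hFid]
    have hbx₁ : b * x₁ = x₂ := by
      have h5 : b * x₁ = algebraMap F E ((e' : F)) * algebraMap F E (1 + (ϖ : F) ^ r * tF) * x₂ := by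
        rw [hbdef]
        calc algebraMap F E ((e' : F)) * (x₂ * c x₁) * x₁
            = algebraMap F E ((e' : F)) * (x₁ * c x₁) * x₂ := by ring
          _ = _ := by rw [hq₁E]
      rw [h5, ← map_mul]
      have h6 : (e' : F) * (1 + (ϖ : F) ^ r * tF) = 1 := by linear_combination he'F
      rw [h6, map_one, one_mul]
    have hA0 : A (0 : E) = 0 ∧ B (0 : E) = 0 := by
      have h7 := hRep.2 0 0 0 (by simp [L42.mk])
      exact ⟨h7.1.symm, h7.2.symm⟩
    have hι0 : ι (0 : E) = 0 := by
      rw [L42.ι_eq hRep hι, hA0.1, hA0.2]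
      ext i j
      fin_cases i <;> fin_cases j <;> simp
    have hux₁ : ι x₁ ∈ Utilde F O (ϖ : F) r := by
      refine ⟨ι y, hιmem y hy, ?_⟩
      rw [L42.ι_eq hRep hι x₁, hx₁A, hx₁B, L42.ι_eq hRep hι y, Matrix.one_fin_two,
        L42.smul_fin_two, L42.add_fin_two, L42.mat2_eq_iff]
      refine ⟨by ring, by ring, by ring, by ring⟩
    have hxcoset : x = (1 + jmat T * ι b) * ι x₁ := by
      have h8 : (1 + jmat T * ι b) * ι x₁ = (ι 1 + jmat T * ι b) * (ι x₁ + jmat T * ι 0) := by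
        rw [hxb b, hι0, mul_zero, add_zero]
      rw [h8, L42.mul_decomp hRep hθ c hcθ hι, hxeq]
      rw [map_one, one_mul, mul_zero, one_mul, add_zero, zero_add, hbx₁]
    exact ⟨b, hbO, ⟨u₀, hu₀O, hbnorm⟩, ι x₁, hux₁, hxcoset⟩
  -- Part (4)
  · intro b b' hb hqb hb' hqb'
    rw [hpart3 b b' hb hqb hb' hqb']
    obtain ⟨u, hu, hqbE⟩ := hqb
    obtain ⟨u', huO', hsp⟩ := hsplit u hu
    have hbu : IsUnit ((1 : O) + ϖ ^ r * ⟨u', huO'⟩) := L42.isUnit_one_add_pow O ϖ hϖ hr _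
    obtain ⟨e', he'⟩ := L42.exists_inv O hbu
    have he'F : (1 + (ϖ : F) ^ r * u') * (e' : F) = 1 := by
      have hcoe : (((1 + ϖ ^ r * ⟨u', huO'⟩ : O)) : F) = 1 + (ϖ : F) ^ r * u' := by
        push_cast; ring
      rw [← hcoe]; exact he'
    have hbinv : b * (c b * algebraMap F E ((e' : F))) = 1 := by
      rw [← mul_assoc, hqbE, hsp, ← map_mul, he'F, map_one]
    constructor
    · rintro ⟨y₀, hy₀, hdiff⟩
      refine ⟨1 + algebraMap F E ((ϖ : F) ^ (r + s)) * (-(y₀ * (c b * algebraMap F E ((e' : F))))),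
        ⟨-(y₀ * (c b * algebraMap F E ((e' : F)))),
          hOE_neg _ (hOE_mul _ _ hy₀ (hOE_mul _ _ (hOE_c _ hb) (hOE_alg _ (SetLike.coe_mem e')))),
          rfl⟩, ?_⟩
      linear_combination (-1 : E) * hdiff
        + (algebraMap F E ((ϖ : F) ^ (r + s)) * y₀) * hbinv
    · rintro ⟨g, ⟨y, hyO, hgdef⟩, hb'eq⟩
      refine ⟨-(b * y), hOE_neg _ (hOE_mul _ _ hb hyO), ?_⟩
      rw [hb'eq, hgdef]; ring
end

section
/- (Image of the map t ↦ t^c/t, from the proof of Lemma 4.3(2).) There exists r₀ ≥ 1 (depending only on E/F and θ) such that for every integer r ≥ r₀, the image of the group homomorphism 1 + ϖ^rO_E → E^×, t ↦ t^c/t, is exactly the group {u ∈ 1 + ϖ^r(θ − θ^c)O_E : N_{E/F}(u) = 1}. -/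
/-- The ring of integers of a `p`-adic field: the integral closure of `ℤ_[p]`. -/
noncomputable def ringOfIntegers (p : ℕ) [Fact p.Prime] (K : Type*) [Field K]
    [Algebra ℚ_[p] K] : Subring K :=
  letI : Algebra ℤ_[p] K :=
    ((algebraMap ℚ_[p] K).comp (PadicInt.Coe.ringHom)).toAlgebra
  (integralClosure ℤ_[p] K).toSubring

set_option linter.unusedSectionVars false

namespace ImageConjAux

section ModuleLevel
open IsLocalRing
variable {p : ℕ} [hp : Fact p.Prime]
variable {A : Type*} [CommRing A] [Algebra ℤ_[p] A]
  [Module.Finite ℤ_[p] A] [Module.Free ℤ_[p] A]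

lemma exists_inverse_of_isUnit_det {x : A}
    (h : IsUnit (LinearMap.det (LinearMap.mul ℤ_[p] A x))) : ∃ z : A, x * z = 1 := by
  classical
  let b := Module.Free.chooseBasis ℤ_[p] A
  rw [← LinearMap.det_toMatrix b] at h
  let e := LinearEquiv.ofIsUnitDet h
  refine ⟨e.symm 1, ?_⟩
  have h1 : e (e.symm 1) = 1 := e.apply_symm_apply 1
  have h2 : e (e.symm 1) = x * (e.symm 1) := by
    have hco := LinearEquiv.coe_ofIsUnitDet h
    have : e (e.symm 1) = (LinearMap.mul ℤ_[p] A x) (e.symm 1) := by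
      conv_lhs => rw [show (e : A → A) = ((e : A →ₗ[ℤ_[p]] A) : A → A) from rfl]
      rw [hco]
    simpa [LinearMap.mul_apply'] using this
  rw [← h2, h1]

lemma isUnit_det_of_inverse {x z : A} (h : x * z = 1) :
    IsUnit (LinearMap.det (LinearMap.mul ℤ_[p] A x)) := by
  apply IsUnit.of_mul_eq_one (LinearMap.det (LinearMap.mul ℤ_[p] A z))
  rw [← LinearMap.det_comp]
  have : (LinearMap.mul ℤ_[p] A x) ∘ₗ (LinearMap.mul ℤ_[p] A z) = LinearMap.id := by
    apply LinearMap.ext; intro w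
    simp [LinearMap.mul_apply', ← mul_assoc, h]
  rw [this, LinearMap.det_id]

lemma det_one_add_p_mul (m : A) :
    IsUnit (LinearMap.det (LinearMap.mul ℤ_[p] A (1 + (p : A) * m))) := by
  classical
  let b := Module.Free.chooseBasis ℤ_[p] A
  rw [← LinearMap.det_toMatrix b]
  by_contra hnu
  have hker : (LinearMap.toMatrix b b (LinearMap.mul ℤ_[p] A (1 + (p:A)*m))).det
      ∈ RingHom.ker (PadicInt.toZMod : ℤ_[p] →+* ZMod p) := by
    rw [PadicInt.ker_toZMod]
    exact (IsLocalRing.mem_maximalIdeal _).mpr hnu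
  have h1 : (PadicInt.toZMod : ℤ_[p] →+* ZMod p)
      ((LinearMap.toMatrix b b (LinearMap.mul ℤ_[p] A (1 + (p:A)*m))).det) = 1 := by
    rw [RingHom.map_det]
    have hrw : LinearMap.mul ℤ_[p] A (1 + (p:A) * m)
        = LinearMap.id + (p:ℤ_[p]) • LinearMap.mul ℤ_[p] A m := by
      have hn : (p:A) * m = (p:ℤ_[p]) • m := by
        rw [Algebra.smul_def, map_natCast]
      rw [hn, map_add, map_smul]
      congr 1
      apply LinearMap.ext; intro w; simp [LinearMap.mul_apply']
    rw [hrw, map_add, map_smul, LinearMap.toMatrix_id]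
    have hmap : ((1 : Matrix _ _ ℤ_[p]) + (p:ℤ_[p]) • LinearMap.toMatrix b b (LinearMap.mul ℤ_[p] A m)).map
        (PadicInt.toZMod : ℤ_[p] →+* ZMod p) = 1 := by
      ext i j
      simp [Matrix.map_apply, Matrix.add_apply, Matrix.smul_apply, smul_eq_mul, map_mul,
        Matrix.one_apply, apply_ite]
    rw [show (PadicInt.toZMod.mapMatrix ((1 : Matrix _ _ ℤ_[p]) + (p:ℤ_[p]) • LinearMap.toMatrix b b (LinearMap.mul ℤ_[p] A m))) = ((1 : Matrix _ _ ℤ_[p]) + (p:ℤ_[p]) • LinearMap.toMatrix b b (LinearMap.mul ℤ_[p] A m)).map (PadicInt.toZMod : ℤ_[p] →+* ZMod p) from rfl, hmap, Matrix.det_one]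
  rw [RingHom.mem_ker] at hker
  rw [hker] at h1
  exact zero_ne_one h1

lemma dvd_iff_repr {ι : Type*} [Fintype ι] (b : Module.Basis ι ℤ_[p] A) (n : ℕ) (z : A) :
    (p : A) ^ n ∣ z ↔ ∀ i, (p : ℤ_[p]) ^ n ∣ b.repr z i := by
  constructor
  · rintro ⟨w, rfl⟩ i
    have hs : (p:A)^n * w = ((p:ℤ_[p])^n) • w := by
      rw [Algebra.smul_def, map_pow, map_natCast]
    rw [hs, map_smul]
    exact ⟨b.repr w i, by simp [smul_eq_mul]⟩
  · intro h
    choose cf hc using h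
    refine ⟨∑ i, cf i • b i, ?_⟩
    calc z = ∑ i, b.repr z i • b i := (b.sum_repr z).symm
      _ = ∑ i, ((p:ℤ_[p])^n * cf i) • b i := by
          refine Finset.sum_congr rfl fun i _ => ?_; rw [hc i]
      _ = ((p:ℤ_[p])^n) • ∑ i, cf i • b i := by
          rw [Finset.smul_sum]; exact Finset.sum_congr rfl fun i _ => (mul_smul _ _ _)
      _ = (p:A)^n * ∑ i, cf i • b i := by
          rw [Algebra.smul_def, map_pow, map_natCast]

lemma smod_iff (a : ℤ_[p]) (n : ℕ) :
    a ≡ 0 [SMOD ((maximalIdeal ℤ_[p]) ^ n • ⊤ : Submodule ℤ_[p] ℤ_[p])] ↔ (p:ℤ_[p])^n ∣ a := by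
  rw [SModEq.sub_mem, sub_zero]
  simp only [← Ideal.one_eq_top, smul_eq_mul, mul_one, PadicInt.maximalIdeal_eq_span_p,
    Ideal.span_singleton_pow, Ideal.mem_span_singleton]

lemma eq_zero_of_forall_dvd (z : A) (h : ∀ n : ℕ, (p:A)^n ∣ z) : z = 0 := by
  classical
  let b := Module.Free.chooseBasis ℤ_[p] A
  have hco : ∀ i, b.repr z i = 0 := by
    intro i
    refine IsHausdorff.haus (inferInstance : IsHausdorff (maximalIdeal ℤ_[p]) ℤ_[p]) _ fun n => ?_
    rw [smod_iff]
    exact (dvd_iff_repr b n z).mp (h n) i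
  have : b.repr z = 0 := by ext i; simpa using hco i
  exact (LinearEquiv.map_eq_zero_iff b.repr).mp this

lemma exists_limit {e : ℕ → A} (hstep : ∀ k, (p:A)^(2^k) ∣ e (k+1) - e k) :
    ∃ L : A, ∀ n, (p:A)^n ∣ L - e n := by
  classical
  let b := Module.Free.chooseBasis ℤ_[p] A
  have hmn : ∀ m n, m ≤ n → (p:A)^m ∣ e n - e m := by
    intro m n hle
    induction n, hle using Nat.le_induction with
    | base => simp
    | succ n hmn ih =>
      have h1 : (p:A)^m ∣ e (n+1) - e n :=
        dvd_trans (pow_dvd_pow _ (le_trans hmn (Nat.le_of_lt (Nat.lt_two_pow_self (n := n))))) (hstep n)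
      have h2 := dvd_add h1 ih
      rwa [sub_add_sub_cancel] at h2
  have hprem : ∀ i : Module.Free.ChooseBasisIndex ℤ_[p] A, ∃ L : ℤ_[p],
      ∀ n, b.repr (e n) i ≡ L [SMOD ((maximalIdeal ℤ_[p])^n • ⊤ : Submodule ℤ_[p] ℤ_[p])] := by
    intro i
    refine IsPrecomplete.prec (inferInstance : IsPrecomplete (maximalIdeal ℤ_[p]) ℤ_[p]) ?_
    intro m n hle
    have h1 : (p:ℤ_[p])^m ∣ b.repr (e n - e m) i := (dvd_iff_repr b m _).mp (hmn m n hle) i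
    rw [SModEq.sub_mem]
    rw [show ((maximalIdeal ℤ_[p])^m • ⊤ : Submodule ℤ_[p] ℤ_[p]) = (maximalIdeal ℤ_[p])^m by
      rw [← Ideal.one_eq_top, smul_eq_mul, mul_one]]
    rw [PadicInt.maximalIdeal_eq_span_p, Ideal.span_singleton_pow, Ideal.mem_span_singleton]
    rw [map_sub] at h1
    have h1' := dvd_neg.mpr h1
    simpa [Finsupp.sub_apply, neg_sub] using h1'
  choose L hL using hprem
  refine ⟨∑ i, L i • b i, fun n => ?_⟩
  rw [dvd_iff_repr b]
  intro i
  have h2 := hL i n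
  rw [SModEq.sub_mem] at h2
  rw [show ((maximalIdeal ℤ_[p])^n • ⊤ : Submodule ℤ_[p] ℤ_[p]) = (maximalIdeal ℤ_[p])^n from by rw [← Ideal.one_eq_top, smul_eq_mul, mul_one]] at h2
  rw [PadicInt.maximalIdeal_eq_span_p, Ideal.span_singleton_pow, Ideal.mem_span_singleton] at h2
  have hrepr : (b.repr (∑ j, L j • b j)) i = L i := by
    have hh := b.repr_sum_self L
    rw [hh]
  rw [map_sub, Finsupp.sub_apply, hrepr]
  have h3 := dvd_neg.mpr h2
  simpa [neg_sub] using h3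

lemma exists_idempotent {x : A} (hx : (p:A) ∣ x^2 - x) :
    ∃ L : A, L * L = L ∧ (p:A) ∣ L - x := by
  classical
  let e : ℕ → A := fun k => Nat.rec x (fun _ a => 3*a^2 - 2*a^3) k
  have he0 : e 0 = x := rfl
  have heS : ∀ k, e (k+1) = 3*(e k)^2 - 2*(e k)^3 := fun k => rfl
  have hsq : ∀ k, (p:A)^(2^k) ∣ (e k)^2 - e k := by
    intro k; induction k with
    | zero => simpa [he0] using hx
    | succ k ih =>
      obtain ⟨s, hs⟩ := ih
      refine ⟨s^2 * ((1 - 2*(e k))^2 - 4), ?_⟩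
      rw [heS k]
      calc (3*(e k)^2 - 2*(e k)^3)^2 - (3*(e k)^2 - 2*(e k)^3)
          = ((e k)^2 - e k)^2 * ((1 - 2*(e k))^2 - 4) := by ring
        _ = ((p:A)^(2^k) * s)^2 * ((1 - 2*(e k))^2 - 4) := by rw [← hs]
        _ = (p:A)^(2^(k+1)) * (s^2 * ((1 - 2*(e k))^2 - 4)) := by
            rw [mul_pow, ← pow_mul, show 2^k*2 = 2^(k+1) from (pow_succ 2 k).symm]; ring
  have hstep : ∀ k, (p:A)^(2^k) ∣ e (k+1) - e k := by
    intro k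
    obtain ⟨s, hs⟩ := hsq k
    refine ⟨s * (1 - 2*(e k)), ?_⟩
    rw [heS k]
    calc 3*(e k)^2 - 2*(e k)^3 - e k = ((e k)^2 - e k) * (1 - 2*(e k)) := by ring
      _ = ((p:A)^(2^k) * s) * (1 - 2*(e k)) := by rw [← hs]
      _ = (p:A)^(2^k) * (s * (1 - 2*(e k))) := by ring
  obtain ⟨L, hL⟩ := exists_limit (p := p) hstep
  have hLL : L*L - L = 0 := by
    refine eq_zero_of_forall_dvd (p := p) _ fun n => ?_
    have h1 := hL n
    have h3 : (p:A)^n ∣ (e n)^2 - e n :=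
      dvd_trans (pow_dvd_pow _ (Nat.le_of_lt (Nat.lt_two_pow_self (n := n)))) (hsq n)
    have hdec : L*L - L = (L - e n)*(L + e n) - (L - e n) + ((e n)^2 - (e n)) := by ring
    rw [hdec]
    exact dvd_add (dvd_sub (h1.mul_right _) h1) h3
  refine ⟨L, by rwa [← sub_eq_zero], ?_⟩
  have h1 : (p:A) ∣ L - e 1 := by simpa using hL 1
  have h2 : (p:A) ∣ e 1 - e 0 := by simpa using hstep 0
  have := dvd_add h1 h2
  rwa [sub_add_sub_cancel, he0] at this

lemma pow_p_dvd [IsDomain A] {x : A} (hnu : ∀ z : A, x * z ≠ 1) :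
    ∃ n : ℕ, 1 ≤ n ∧ ∃ w : A, x ^ n = (p:A) * w := by
  classical
  let b := Module.Free.chooseBasis ℤ_[p] A
  have main : ∀ i j : ℕ,
      (fun k : ℕ => fun i' => PadicInt.toZMod (b.repr (x^k) i')) i
        = (fun k : ℕ => fun i' => PadicInt.toZMod (b.repr (x^k) i')) j →
      (p:A) ∣ x^j - x^i := by
    intro i j h
    have : ∀ i', (p:ℤ_[p])^1 ∣ b.repr (x^j - x^i) i' := by
      intro i'
      have hz : PadicInt.toZMod (b.repr (x^j) i' - b.repr (x^i) i') = 0 := by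
        rw [map_sub]
        have := congrFun h i'
        simp only at this
        rw [this, sub_self]
      have hker : (b.repr (x^j) i' - b.repr (x^i) i') ∈ RingHom.ker (PadicInt.toZMod : ℤ_[p] →+* ZMod p) := hz
      rw [PadicInt.ker_toZMod, PadicInt.maximalIdeal_eq_span_p, Ideal.mem_span_singleton] at hker
      rw [map_sub]
      simpa using hker
    have := (dvd_iff_repr b 1 (x^j - x^i)).mpr this
    simpa using this
  obtain ⟨i, j, hne, heq⟩ := Finite.exists_ne_map_eq_of_infinite
    (fun k : ℕ => fun i' => PadicInt.toZMod (b.repr (x^k) i'))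
  have hij : ∃ i j : ℕ, i < j ∧ (p:A) ∣ x^j - x^i := by
    rcases lt_or_gt_of_ne hne with h | h
    · exact ⟨i, j, h, main i j heq⟩
    · exact ⟨j, i, h, main j i heq.symm⟩
  obtain ⟨i, j, hlt, hdvd⟩ := hij
  have hd1 : 1 ≤ j - i := by omega
  have key : ∀ k m : ℕ, i ≤ m → (p:A) ∣ x^(m + k*(j-i)) - x^m := by
    intro k
    induction k with
    | zero => intro m _; simp
    | succ k ih =>
      intro m hm
      have e1 : m + (k+1)*(j-i) = (m - i) + k*(j-i) + j := by rw [Nat.succ_mul]; omega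
      have e2 : m + k*(j-i) = (m - i) + k*(j-i) + i := by omega
      have h1 : x^(m + (k+1)*(j-i)) - x^(m + k*(j-i)) = x^((m - i) + k*(j-i)) * (x^j - x^i) := by
        rw [mul_sub, ← pow_add, ← pow_add, e1, e2]
      have h2 : (p:A) ∣ x^(m + (k+1)*(j-i)) - x^(m + k*(j-i)) := h1 ▸ hdvd.mul_left _
      have := dvd_add h2 (ih m hm)
      rwa [sub_add_sub_cancel] at this
  set N := (i+1)*(j-i) with hN
  have hN1 : 1 ≤ N := by
    have := Nat.mul_le_mul (Nat.succ_le_succ (Nat.zero_le i)) hd1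
    simpa [hN] using this
  have hiN : i ≤ N := by
    calc i ≤ i + 1 := Nat.le_succ i
      _ = (i+1)*1 := (mul_one _).symm
      _ ≤ (i+1)*(j-i) := Nat.mul_le_mul_left _ hd1
  have h2N : (p:A) ∣ (x^N)^2 - x^N := by
    have := key (i+1) N hiN
    rw [← hN, ← two_mul] at this
    rwa [show (x^N)^2 = x^(2*N) from by rw [← pow_mul, Nat.mul_comm N 2]]
  obtain ⟨L, hLid, hLx⟩ := exists_idempotent h2N
  have hL01 : L = 0 ∨ L = 1 := by
    have : L * (L - 1) = 0 := by rw [mul_sub, hLid]; ring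
    rcases mul_eq_zero.mp this with h | h
    · exact Or.inl h
    · exact Or.inr (sub_eq_zero.mp h)
  rcases hL01 with rfl | rfl
  · refine ⟨N, hN1, ?_⟩
    have : (p:A) ∣ x^N := by
      have := dvd_neg.mpr hLx
      simpa using this
    obtain ⟨w, hw⟩ := this
    exact ⟨w, hw⟩
  · exfalso
    obtain ⟨w, hw⟩ := hLx
    have hxN : x^N = 1 + (p:A) * (-w) := by linear_combination -hw
    have hdet := det_one_add_p_mul (p := p) (A := A) (-w)
    rw [← hxN] at hdet
    obtain ⟨z, hz⟩ := exists_inverse_of_isUnit_det hdet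
    have : x * (x^(N-1) * z) = 1 := by
      rw [← mul_assoc, ← pow_succ']
      rw [show N - 1 + 1 = N from by omega]
      exact hz
    exact hnu _ this

end ModuleLevel

section FieldLevel
variable {p : ℕ} [hp : Fact p.Prime]
variable {K : Type*} [Field K] [Algebra ℚ_[p] K] [FiniteDimensional ℚ_[p] K]
  [Algebra ℤ_[p] K] [IsScalarTower ℤ_[p] ℚ_[p] K]

theorem padic_instances :
    Module.Finite ℤ_[p] (integralClosure ℤ_[p] K) ∧
    NoZeroSMulDivisors ℤ_[p] (integralClosure ℤ_[p] K) := by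
  constructor
  · haveI : IsNoetherian ℤ_[p] (integralClosure ℤ_[p] K) :=
      IsIntegralClosure.isNoetherian ℤ_[p] ℚ_[p] K (integralClosure ℤ_[p] K)
    exact ⟨IsNoetherian.noetherian ⊤⟩
  · refine (fun h : Function.Injective (algebraMap ℤ_[p] (integralClosure ℤ_[p] K)) =>
      (noZeroSMulDivisors_iff_right_eq_zero_of_smul).mpr fun r hr m hm => by
        rw [Algebra.smul_def, mul_eq_zero] at hm
        exact hm.resolve_left ((map_ne_zero_iff _ h).mpr hr)) ?_
    intro a b hab
    have h1 : algebraMap ℤ_[p] K a = algebraMap ℤ_[p] K b := by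
      have := congrArg (Subtype.val) hab
      simpa [Subalgebra.algebraMap_eq] using this
    rw [IsScalarTower.algebraMap_eq ℤ_[p] ℚ_[p] K] at h1
    exact Subtype.coe_injective ((algebraMap ℚ_[p] K).injective (by exact h1))

theorem unit_lemma (m : K) (hm : m ∈ integralClosure ℤ_[p] K) :
    ∃ z ∈ integralClosure ℤ_[p] K, (1 + (p : K) * m) * z = 1 := by
  haveI := (padic_instances (p := p) (K := K)).1
  haveI := (padic_instances (p := p) (K := K)).2
  obtain ⟨z, hz⟩ := exists_inverse_of_isUnit_det
    (det_one_add_p_mul (p := p) (A := integralClosure ℤ_[p] K) ⟨m, hm⟩)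
  refine ⟨(z : K), z.2, ?_⟩
  have := congrArg (Subtype.val) hz
  push_cast at this
  convert this using 2

theorem pow_lemma (x : K) (hx : x ∈ integralClosure ℤ_[p] K)
    (hnu : ∀ z ∈ integralClosure ℤ_[p] K, x * z ≠ 1) :
    ∃ n : ℕ, 1 ≤ n ∧ ∃ w ∈ integralClosure ℤ_[p] K, x ^ n = (p : K) * w := by
  haveI := (padic_instances (p := p) (K := K)).1
  haveI := (padic_instances (p := p) (K := K)).2
  have hnu' : ∀ z : (integralClosure ℤ_[p] K), (⟨x, hx⟩ : integralClosure ℤ_[p] K) * z ≠ 1 := by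
    intro z h
    apply hnu (z : K) z.2
    have := congrArg (Subtype.val) h
    push_cast at this
    exact this
  obtain ⟨n, hn, w, hw⟩ := pow_p_dvd (p := p) hnu'
  refine ⟨n, hn, (w : K), w.2, ?_⟩
  have := congrArg (Subtype.val) hw
  push_cast at this
  exact this

end FieldLevel

end ImageConjAux

open ImageConjAux in
/-- **Image of the map `t ↦ tᶜ/t` (from the proof of Lemma 4.3(2)).**
Let `F` be a finite extension of `ℚ_p` with ring of integers `O_F` and uniformizer `ϖ`, let
`E/F` be a quadratic extension with ring of integers `O_E = O_F + θ·O_F`, and let `c` be the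
nontrivial `F`-automorphism of `E`.  There exists `r₀ ≥ 1` (depending only on `E/F` and `θ`)
such that for every `r ≥ r₀`, the image of the group homomorphism
`1 + ϖ^r O_E → E^×, t ↦ tᶜ/t` is exactly `{u ∈ 1 + ϖ^r(θ − θᶜ)O_E : N_{E/F}(u) = 1}`. -/
theorem image_of_conj_div_self
    (p : ℕ) [Fact p.Prime]
    (F : Type*) [Field F] [Algebra ℚ_[p] F] [FiniteDimensional ℚ_[p] F]
    (E : Type*) [Field E] [Algebra ℚ_[p] E] [Algebra F E] [IsScalarTower ℚ_[p] F E]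
    (hquad : Module.finrank F E = 2)
    (c : E ≃ₐ[F] E)
    (ϖ : ringOfIntegers p F) (hϖ : Irreducible ϖ)
    (θ : E) (hθmem : θ ∈ ringOfIntegers p E)
    (hgen : ∀ x : E, x ∈ ringOfIntegers p E ↔
      ∃ a b : ringOfIntegers p F, x = algebraMap F E (a : F) + θ * algebraMap F E (b : F))
    (hθc : c θ ≠ θ) :
    ∃ r₀ : ℕ, 1 ≤ r₀ ∧ ∀ r : ℕ, r₀ ≤ r →
      {z : E | ∃ t : E,
          (∃ y ∈ ringOfIntegers p E, t = 1 + algebraMap F E ((ϖ : F) ^ r) * y) ∧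
          z = c t / t} =
      {u : E | (∃ y ∈ ringOfIntegers p E,
          u = 1 + algebraMap F E ((ϖ : F) ^ r) * (θ - c θ) * y) ∧ u * c u = 1} := by
  letI : Algebra ℤ_[p] F := ((algebraMap ℚ_[p] F).comp (PadicInt.Coe.ringHom)).toAlgebra
  letI : Algebra ℤ_[p] E := ((algebraMap ℚ_[p] E).comp (PadicInt.Coe.ringHom)).toAlgebra
  haveI : IsScalarTower ℤ_[p] ℚ_[p] F := IsScalarTower.of_algebraMap_eq fun x => rfl
  haveI : IsScalarTower ℤ_[p] ℚ_[p] E := IsScalarTower.of_algebraMap_eq fun x => rfl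
  haveI : IsScalarTower ℤ_[p] F E := IsScalarTower.of_algebraMap_eq fun x => by
    exact IsScalarTower.algebraMap_apply ℚ_[p] F E (x : ℚ_[p])
  haveI : FiniteDimensional F E := FiniteDimensional.of_finrank_pos (by rw [hquad]; norm_num)
  haveI : FiniteDimensional ℚ_[p] E := FiniteDimensional.trans ℚ_[p] F E
  -- membership translations
  have hFmem : ∀ x : F, x ∈ ringOfIntegers p F ↔ x ∈ integralClosure ℤ_[p] F := fun _ => Iff.rfl
  have hEmem : ∀ x : E, x ∈ ringOfIntegers p E ↔ x ∈ integralClosure ℤ_[p] E := fun _ => Iff.rfl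
  -- image of O_F in O_E
  have hmapFE : ∀ x : F, x ∈ integralClosure ℤ_[p] F → algebraMap F E x ∈ integralClosure ℤ_[p] E := by
    intro x hx
    exact IsIntegral.map (IsScalarTower.toAlgHom ℤ_[p] F E) hx
  -- c preserves O_E
  have hcmem : ∀ y : E, y ∈ integralClosure ℤ_[p] E → c y ∈ integralClosure ℤ_[p] E := by
    intro y hy
    exact IsIntegral.map ((c.restrictScalars ℤ_[p]).toAlgHom) hy
  -- θ is not in F
  have hθnotF : ∀ a : F, θ ≠ algebraMap F E a := by
    intro a ha
    apply hθc
    rw [ha, c.commutes]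
  have hθne : θ ≠ 0 := by
    intro h
    exact hθc (by rw [h, map_zero])
  -- every element of E is α + θ β
  have hspan : ∀ x : E, ∃ α β : F, x = algebraMap F E α + θ * algebraMap F E β := by
    have hli : LinearIndependent F ![(1 : E), θ] := by
      rw [linearIndependent_fin2]
      constructor
      · simpa using hθne
      · intro a ha
        simp only [Matrix.cons_val_one, Matrix.head_cons, Matrix.cons_val_zero] at ha
        rcases eq_or_ne a 0 with rfl | ha0
        · simp at ha
        · apply hθnotF a⁻¹
          rw [Algebra.algebraMap_eq_smul_one]
          rw [← ha, smul_smul, inv_mul_cancel₀ ha0, one_smul]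
    have hsp : Submodule.span F (Set.range ![(1 : E), θ]) = ⊤ := by
      apply Submodule.eq_top_of_finrank_eq
      rw [finrank_span_eq_card hli]
      simp [hquad]
    intro x
    have hx : x ∈ Submodule.span F (Set.range ![(1 : E), θ]) := by rw [hsp]; trivial
    rw [show Set.range ![(1 : E), θ] = {(1 : E), θ} from by
      simp [Matrix.range_cons, Matrix.range_empty, Set.pair_comm]
      ] at hx
    rw [Submodule.mem_span_pair] at hx
    obtain ⟨a, b, hab⟩ := hx
    refine ⟨a, b, ?_⟩
    rw [← hab, Algebra.smul_def, Algebra.smul_def, mul_one, mul_comm θ _]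
  -- trace relation: c θ = s - θ
  have hcθ : ∃ s : F, c θ = algebraMap F E s - θ := by
    obtain ⟨a, b, hab⟩ := hspan (θ * θ)
    have hab' : c θ * c θ = algebraMap F E a + c θ * algebraMap F E b := by
      have := congrArg c hab
      simpa [map_add, map_mul, c.commutes] using this
    have hsub : (θ - c θ) * (θ + c θ) = (θ - c θ) * algebraMap F E b := by
      ring_nf
      linear_combination hab - hab'
    have hne : θ - c θ ≠ 0 := sub_ne_zero_of_ne (Ne.symm hθc)
    have h2 := mul_left_cancel₀ hne hsub
    exact ⟨b, by linear_combination h2⟩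
  obtain ⟨s, hs⟩ := hcθ
  -- c is an involution
  have hccθ : c (c θ) = θ := by
    rw [hs, map_sub, c.commutes, hs]
    ring
  have hcc : ∀ x : E, c (c x) = x := by
    intro x
    obtain ⟨α, β, rfl⟩ := hspan x
    simp [map_add, map_mul, c.commutes, hccθ]
  -- ϖ is not invertible in O_F
  have hϖnu : ∀ z ∈ integralClosure ℤ_[p] F, (ϖ : F) * z ≠ 1 := by
    intro z hz heq
    apply hϖ.not_isUnit
    refine IsUnit.of_mul_eq_one (a := ϖ) ⟨z, (hFmem z).mpr hz⟩ ?_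
    exact Subtype.ext heq
  obtain ⟨n, hn1, w, hwmem, hwn⟩ := pow_lemma (p := p) (K := F) (ϖ : F) ((hFmem _).mp ϖ.2) hϖnu
  -- inverses of 1 + ϖ^r z
  have hinv : ∀ r : ℕ, n ≤ r → ∀ z : E, z ∈ integralClosure ℤ_[p] E →
      ∃ ti ∈ integralClosure ℤ_[p] E, (1 + algebraMap F E ((ϖ : F) ^ r) * z) * ti = 1 := by
    intro r hr z hz
    have hfac : (ϖ : F) ^ r = (p : F) * (w * (ϖ : F) ^ (r - n)) := by
      calc (ϖ : F) ^ r = (ϖ : F) ^ n * (ϖ : F) ^ (r - n) := by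
            rw [← pow_add]; congr 1; omega
        _ = (p : F) * (w * (ϖ : F) ^ (r - n)) := by rw [hwn]; ring
    have hm : algebraMap F E (w * (ϖ : F) ^ (r - n)) * z ∈ integralClosure ℤ_[p] E :=
      mul_mem (hmapFE _ (mul_mem hwmem (pow_mem ((hFmem _).mp ϖ.2) _))) hz
    obtain ⟨ti, hti, hti1⟩ := unit_lemma (p := p) (K := E) _ hm
    refine ⟨ti, hti, ?_⟩
    rw [hfac, map_mul, map_natCast, mul_assoc]
    exact hti1
  have hϖF : (ϖ : F) ≠ 0 := fun h => hϖ.ne_zero (Subtype.ext (by simpa using h))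
  have hδ0 : θ - c θ ≠ 0 := sub_ne_zero_of_ne (Ne.symm hθc)
  refine ⟨n, hn1, fun r hr => ?_⟩
  have hπne : algebraMap F E ((ϖ : F) ^ r) ≠ 0 := fun h =>
    pow_ne_zero r hϖF ((algebraMap F E).injective (by rw [h, map_zero]))
  set π := algebraMap F E ((ϖ : F) ^ r) with hπ
  have hπc : c π = π := c.commutes _
  ext u
  simp only [Set.mem_setOf_eq]
  constructor
  · rintro ⟨t, ⟨y, hy, rfl⟩, rfl⟩
    have hy' := (hEmem y).mp hy
    obtain ⟨a, b, hab⟩ := (hgen y).mp hy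
    obtain ⟨ti, hti, hti1⟩ := hinv r hr y hy'
    have ht0 : (1 + π * y) ≠ 0 := left_ne_zero_of_mul_eq_one hti1
    have hct0 : c (1 + π * y) ≠ 0 := fun h => ht0 (by rw [← hcc (1 + π * y), h, map_zero])
    constructor
    · refine ⟨-(algebraMap F E (b : F)) * ti, ?_, ?_⟩
      · exact mul_mem (neg_mem (hmapFE _ ((hFmem _).mp b.2))) hti
      · have hcy : c y = algebraMap F E (a : F) + c θ * algebraMap F E (b : F) := by
          rw [hab]; simp [map_add, map_mul, c.commutes]
        have hct : c (1 + π * y) = 1 + π * c y := by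
          simp [map_add, map_mul, hπc]
        rw [hct, div_eq_iff ht0]
        have hti1' : ti * (1 + π * y) = 1 := by rw [mul_comm]; exact hti1
        linear_combination π * hcy - π * hab +
          π * (θ - c θ) * (algebraMap F E (b : F)) * hti1'
    · rw [map_div₀, hcc, div_mul_div_comm, mul_comm (c (1 + π * y)) (1 + π * y)]
      exact div_self (mul_ne_zero ht0 hct0)
  · rintro ⟨⟨y, hy, rfl⟩, hnorm⟩
    have hy' := (hEmem y).mp hy
    have hθy : θ * y ∈ integralClosure ℤ_[p] E := mul_mem ((hEmem θ).mp hθmem) hy'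
    obtain ⟨ti, hti, hti1⟩ := hinv r hr (θ * y) hθy
    have hs0 : (1 + π * (θ * y)) ≠ 0 := left_ne_zero_of_mul_eq_one hti1
    have htiinv : ti = (1 + π * (θ * y))⁻¹ := eq_inv_of_mul_eq_one_right hti1
    have hcu : c (1 + π * (θ - c θ) * y) = 1 + π * (c θ - θ) * c y := by
      simp [map_add, map_mul, map_sub, hπc, hcc]
    have hexp : π * (θ - c θ) * ((y - c y) - π * (θ - c θ) * (y * c y)) = 0 := by
      rw [hcu] at hnorm
      linear_combination hnorm
    have h7 : y - c y = π * (θ - c θ) * (y * c y) := by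
      rcases mul_eq_zero.mp hexp with h8 | h8
      · exact absurd h8 (mul_ne_zero hπne hδ0)
      · linear_combination h8
    have hcs0 : c (1 + π * (θ * y)) ≠ 0 := fun h =>
      hs0 (by rw [← hcc (1 + π * (θ * y)), h, map_zero])
    have hcs : c (1 + π * (θ * y)) = 1 + π * (c θ * c y) := by
      simp [map_add, map_mul, hπc]
    refine ⟨ti, ⟨-(θ * y * ti), ?_, ?_⟩, ?_⟩
    · exact neg_mem (mul_mem hθy hti)
    · have hti1' : ti * (1 + π * (θ * y)) = 1 := by rw [mul_comm]; exact hti1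
      linear_combination hti1'
    · rw [hcs] at hcs0
      rw [htiinv, map_inv₀, div_eq_mul_inv, inv_inv, hcs]
      rw [eq_comm, inv_mul_eq_iff_eq_mul₀ hcs0]
      linear_combination (π * c θ) * h7
end
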